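/- Let n ≥ 5 be odd and let h ∈ [1, (n−1)/2] be odd. Then the set B_h = {0̄} ∪ {1̄, 3̄, 5̄, ..., h̄} ⊆ ℤ/nℤ is an atom of the reduced power monoid P_{fin,0}(ℤ/nℤ): whenever B_h = X + Y with 0 ∈ X, 0 ∈ Y, one of X, Y equals {0̄}. -/
import Mathlib


open Pointwise

theorem Bh_is_atom (n : ℕ) (hn : 5 ≤ n) (hodd : Odd n)
    (h : ℕ) (hh1 : 1 ≤ h) (hhodd : Odd h) (hh2 : h ≤ (n - 1) / 2) :
    let B : Finset (ZMod n) :=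
      {0} ∪ (((Finset.range (h + 1)).filter (fun k => Odd k)).image
        (fun k : ℕ => (k : ZMod n)))
    B ≠ {0} ∧
      ∀ X Y : Finset (ZMod n), (0 : ZMod n) ∈ X → (0 : ZMod n) ∈ Y →
        B = X + Y → X = {0} ∨ Y = {0} := by
  intro B
  haveI : Fact (1 < n) := ⟨by omega⟩
  obtain ⟨t, hnt⟩ := hodd
  -- membership characterization
  have memB : ∀ a : ZMod n, a ∈ B ↔ a = 0 ∨ ∃ k : ℕ, k < h + 1 ∧ Odd k ∧ (k : ZMod n) = a := by
    intro a
    simp only [B, Finset.mem_union, Finset.mem_singleton, Finset.mem_image,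
      Finset.mem_filter, Finset.mem_range]
    constructor
    · rintro (rfl | ⟨k, ⟨hk1, hk2⟩, hk3⟩)
      · exact Or.inl rfl
      · exact Or.inr ⟨k, hk1, hk2, hk3⟩
    · rintro (rfl | ⟨k, hk1, hk2, hk3⟩)
      · exact Or.inl rfl
      · exact Or.inr ⟨k, ⟨hk1, hk2⟩, hk3⟩
  have cast_inj_lt : ∀ k m : ℕ, k < n → m < n → (k : ZMod n) = (m : ZMod n) → k = m := by
    intro k m hk hm hkm
    rw [ZMod.natCast_eq_natCast_iff] at hkm
    rwa [Nat.ModEq, Nat.mod_eq_of_lt hk, Nat.mod_eq_of_lt hm] at hkm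
  constructor
  · intro hB0
    have h1 : (1 : ZMod n) ∈ B := by
      rw [memB]
      exact Or.inr ⟨1, by omega, odd_one, by norm_num⟩
    rw [hB0, Finset.mem_singleton] at h1
    exact one_ne_zero h1
  · intro X Y hX hY hB
    by_contra hcon
    push_neg at hcon
    obtain ⟨hXne, hYne⟩ := hcon
    -- X ⊆ B, Y ⊆ B
    have hXB : X ⊆ B := by
      intro x hx
      rw [hB]
      have := Finset.add_mem_add hx hY
      simpa using this
    have hYB : Y ⊆ B := by
      intro y hy
      rw [hB]
      have := Finset.add_mem_add hX hy
      simpa using this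
    -- get nonzero elements
    have hex : ∀ (Z : Finset (ZMod n)), (0 : ZMod n) ∈ Z → Z ≠ {0} →
        ∃ z ∈ Z, z ≠ 0 := by
      intro Z h0 hne
      by_contra hc
      push_neg at hc
      apply hne
      apply Finset.eq_singleton_iff_unique_mem.mpr
      exact ⟨h0, fun z hz => by by_contra hz0; exact hz0 (hc z hz)⟩
    obtain ⟨a, haX, ha0⟩ := hex X hX hXne
    obtain ⟨b, hbY, hb0⟩ := hex Y hY hYne
    have haB := hXB haX
    have hbB := hYB hbY
    rw [memB] at haB hbB
    obtain ⟨k, hk1, hk2, hk3⟩ := haB.resolve_left ha0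
    obtain ⟨m, hm1, hm2, hm3⟩ := hbB.resolve_left hb0
    have hk1' : 1 ≤ k := hk2.pos
    have hm1' : 1 ≤ m := hm2.pos
    have hab : a + b ∈ B := by
      rw [hB]
      exact Finset.add_mem_add haX hbY
    rw [memB] at hab
    have hsum : ((k + m : ℕ) : ZMod n) = a + b := by
      push_cast
      rw [hk3, hm3]
    have hkmlt : k + m < n := by omega
    rcases hab with hab0 | ⟨j, hj1, hj2, hj3⟩
    · have : ((k + m : ℕ) : ZMod n) = ((0 : ℕ) : ZMod n) := by
        rw [hsum, hab0]; norm_num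
      have := cast_inj_lt _ _ hkmlt (by omega) this
      omega
    · have : ((k + m : ℕ) : ZMod n) = (j : ZMod n) := by rw [hsum, hj3]
      have heq := cast_inj_lt _ _ hkmlt (by omega) this
      obtain ⟨p, hp⟩ := hk2
      obtain ⟨q, hq⟩ := hm2
      obtain ⟨r, hr⟩ := hj2
      omega
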